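/- Let X be a centered stationary Gaussian process with covariance function ρ satisfying ρ(t) < 1 for t > 0, and let X_1,...,X_n be i.i.d. copies with X_{n:n}(t) = min_i X_i(t). Then for all t > 0 and u > 0, P(X_{n:n}(t) > u | X_{n:n}(0) > u) ≤ 2^n (1 - Φ(u √((1-|ρ(t)|)/(1+|ρ(t)|))))^n, where Φ is the standard normal distribution function. -/

import Mathlib

open MeasureTheory Filter ProbabilityTheory Real
open scoped NNReal ENNReal

lemma rot_volume_preserving (r s : ℝ) (hrs : r^2 + s^2 = 1) :
    MeasurePreserving (fun p : ℝ × ℝ => (r*p.1 + s*p.2, s*p.1 - r*p.2))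
      (volume : Measure (ℝ × ℝ)) volume := by
  set M : Matrix (Fin 2) (Fin 2) ℝ := !![r, s; s, -r] with hM
  have hdet : M.det = -1 := by
    simp [hM, Matrix.det_fin_two_of]; nlinarith
  have hdet' : M.det ≠ 0 := by rw [hdet]; norm_num
  have hvol : Measure.map (Matrix.toLin' M) volume = volume := by
    rw [Real.map_matrix_volume_pi_eq_smul_volume_pi hdet', hdet]
    norm_num
  have hmp : MeasurePreserving (Matrix.toLin' M) (volume : Measure (Fin 2 → ℝ)) volume :=
    ⟨(Matrix.toLin' M).continuous_of_finiteDimensional.measurable, hvol⟩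
  have := ((volume_preserving_finTwoArrow ℝ).comp hmp).comp
    (volume_preserving_finTwoArrow ℝ).symm
  convert this using 1
  funext p
  simp [MeasurableEquiv.finTwoArrow, Matrix.toLin'_apply, Matrix.mulVec, dotProduct,
    Fin.sum_univ_two, hM, Function.comp]
  ring_nf
  trivial

lemma gauss_prod_withDensity :
    (gaussianReal 0 1).prod (gaussianReal 0 1)
      = (volume : Measure (ℝ × ℝ)).withDensity
          (fun p => gaussianPDF 0 1 p.1 * gaussianPDF 0 1 p.2) := by
  have h1 : (1 : ℝ≥0) ≠ 0 := one_ne_zero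
  refine Measure.prod_eq fun s t hs ht => ?_
  rw [withDensity_apply _ (hs.prod ht), Measure.volume_eq_prod, ← Measure.prod_restrict,
    lintegral_prod_mul (measurable_gaussianPDF 0 1).aemeasurable
      (measurable_gaussianPDF 0 1).aemeasurable,
    gaussianReal_of_var_ne_zero 0 h1, withDensity_apply _ hs, withDensity_apply _ ht]

lemma pdf_rot (r s x y : ℝ) (hrs : r^2 + s^2 = 1) :
    gaussianPDF 0 1 (r*x+s*y) * gaussianPDF 0 1 (s*x-r*y)
      = gaussianPDF 0 1 x * gaussianPDF 0 1 y := by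
  simp only [gaussianPDF, gaussianPDFReal]
  rw [← ENNReal.ofReal_mul (by positivity), ← ENNReal.ofReal_mul (by positivity)]
  congr 1
  have he : rexp (-(r * x + s * y - 0) ^ 2 / (2 * ((1:ℝ≥0):ℝ)))
        * rexp (-(s * x - r * y - 0) ^ 2 / (2 * ((1:ℝ≥0):ℝ)))
      = rexp (-(x - 0) ^ 2 / (2 * ((1:ℝ≥0):ℝ))) * rexp (-(y - 0) ^ 2 / (2 * ((1:ℝ≥0):ℝ))) := by
    rw [← Real.exp_add, ← Real.exp_add]
    congr 1
    push_cast
    nlinarith [hrs]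
  linear_combination ((Real.sqrt (2*π*((1:ℝ≥0):ℝ)))⁻¹)^2 * he

lemma gauss2_rot (r s : ℝ) (hrs : r^2 + s^2 = 1) :
    MeasurePreserving (fun p : ℝ × ℝ => (r*p.1 + s*p.2, s*p.1 - r*p.2))
      ((gaussianReal 0 1).prod (gaussianReal 0 1))
      ((gaussianReal 0 1).prod (gaussianReal 0 1)) := by
  have hT := rot_volume_preserving r s hrs
  set T := fun p : ℝ × ℝ => (r*p.1+s*p.2, s*p.1-r*p.2) with hTdef
  have hTm : Measurable T := hT.measurable
  rw [gauss_prod_withDensity]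
  refine ⟨hTm, ?_⟩
  set F := fun p : ℝ × ℝ => gaussianPDF 0 1 p.1 * gaussianPDF 0 1 p.2 with hF
  have hFm : Measurable F := ((measurable_gaussianPDF 0 1).comp measurable_fst).mul
    ((measurable_gaussianPDF 0 1).comp measurable_snd)
  have hFT : ∀ p, F (T p) = F p := fun p => pdf_rot r s p.1 p.2 hrs
  ext A hA
  rw [Measure.map_apply hTm hA, withDensity_apply _ (hTm hA), withDensity_apply _ hA]
  calc ∫⁻ x in T ⁻¹' A, F x ∂volume
      = ∫⁻ x in T ⁻¹' A, F (T x) ∂volume := lintegral_congr fun x => (hFT x).symm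
    _ = ∫⁻ y in A, F y ∂volume := hT.setLIntegral_comp_preimage hA hFm

lemma gauss_Iic_zero : (gaussianReal 0 1 : Measure ℝ) (Set.Iic 0) = 1/2 := by
  set γ := (gaussianReal 0 1 : Measure ℝ) with hγ
  have hmap : γ.map (fun x => (-1 : ℝ) * x) = γ := by
    rw [hγ, gaussianReal_map_const_mul (-1)]
    norm_num
  have h0 : γ {0} = 0 :=
    gaussianReal_absolutelyContinuous 0 one_ne_zero (by simp)
  have hIic : γ (Set.Iic 0) = γ (Set.Ici 0) := by
    conv_lhs => rw [← hmap]
    rw [Measure.map_apply (measurable_const_mul _) measurableSet_Iic]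
    congr 1
    ext x
    simp [neg_one_mul, neg_nonpos]
  have hIoi : γ (Set.Ici 0) = γ (Set.Ioi 0) := by
    refine le_antisymm ?_ (measure_mono Set.Ioi_subset_Ici_self)
    calc γ (Set.Ici 0) = γ (Set.Ioi 0 ∪ {0}) := by
          congr 1; ext x; simp [le_iff_lt_or_eq, eq_comm, or_comm]
      _ ≤ γ (Set.Ioi 0) + γ {0} := measure_union_le _ _
      _ = γ (Set.Ioi 0) := by rw [h0, add_zero]
  have hsum : γ (Set.Iic 0) + γ (Set.Ioi 0) = 1 := by
    rw [← measure_union (Set.Iic_disjoint_Ioi le_rfl) measurableSet_Ioi,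
      Set.Iic_union_Ioi, measure_univ]
  rw [hIoi] at hIic
  rw [← hIic, ← two_mul] at hsum
  rw [ENNReal.eq_div_iff (by norm_num) (by norm_num), hsum]

set_option maxHeartbeats 1000000

theorem min_order_statistics_cond_prob_gaussian_bound
    {Ω : Type*} [MeasureSpace Ω] (P : Measure Ω) [IsProbabilityMeasure P]
    (n : ℕ) (hn : 1 ≤ n) (ρ : ℝ → ℝ) (hρ : ∀ t : ℝ, 0 < t → ρ t < 1)
    (Xs : Fin n → ℝ → Ω → ℝ)
    (hmeas : ∀ i t, Measurable (Xs i t))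
    (hindep : ∀ t : ℝ,
      iIndepFun (fun i ω => (Xs i 0 ω, Xs i t ω)) P)
    (hpair : ∀ (i : Fin n) (t : ℝ),
      Measure.map (fun ω => (Xs i 0 ω, Xs i t ω)) P
        = Measure.map (fun p : ℝ × ℝ =>
            (p.1, ρ t * p.1 + Real.sqrt (1 - ρ t ^ 2) * p.2))
          ((gaussianReal 0 1).prod (gaussianReal 0 1))) :
    ∀ t u : ℝ, 0 < t → 0 < u →
      (P[|{ω | ∀ i, u < Xs i 0 ω}] {ω | ∀ i, u < Xs i t ω}).toReal
        ≤ 2 ^ n * (1 - (gaussianReal 0 1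
            (Set.Iic (u * Real.sqrt ((1 - |ρ t|) / (1 + |ρ t|))))).toReal) ^ n := by
  intro t u ht hu
  have hr1 : ρ t < 1 := hρ t ht
  set r : ℝ := ρ t with hrdef
  set γ : Measure ℝ := gaussianReal 0 1 with hγ
  set s : ℝ := Real.sqrt (1 - r ^ 2) with hsdef
  set φ : ℝ × ℝ → ℝ × ℝ := fun p => (p.1, r * p.1 + s * p.2) with hφdef
  set ν : Measure (ℝ × ℝ) := Measure.map φ (γ.prod γ) with hνdef
  set pair : Fin n → Ω → ℝ × ℝ := fun i ω => (Xs i 0 ω, Xs i t ω) with hpairdef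
  have hpm : ∀ i, Measurable (pair i) := fun i => (hmeas i 0).prodMk (hmeas i t)
  set H : Set (ℝ × ℝ) := {p | u < p.1} with hHdef
  set S : Set (ℝ × ℝ) := {p | u < p.1 ∧ u < p.2} with hSdef
  have hH : MeasurableSet H := measurableSet_lt measurable_const measurable_fst
  have hS : MeasurableSet S :=
    (measurableSet_lt measurable_const measurable_fst).inter
      (measurableSet_lt measurable_const measurable_snd)
  set A : Set Ω := {ω | ∀ i, u < Xs i 0 ω} with hAdef
  set B : Set Ω := {ω | ∀ i, u < Xs i t ω} with hBdef
  have hAeq : A = ⋂ i, pair i ⁻¹' H := by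
    ext ω; simp [hAdef, hpairdef, hHdef, Set.mem_iInter]
  have hABeq : A ∩ B = ⋂ i, pair i ⁻¹' S := by
    ext ω
    simp only [hAdef, hBdef, hpairdef, hSdef, Set.mem_inter_iff, Set.mem_setOf_eq,
      Set.mem_iInter, Set.mem_preimage]
    exact (forall_and).symm
  have hAm : MeasurableSet A := by
    rw [hAeq]; exact MeasurableSet.iInter fun i => hpm i hH
  have hφm : Measurable φ :=
    measurable_fst.prodMk ((measurable_const.mul measurable_fst).add
      (measurable_const.mul measurable_snd))
  have hPA : P A = ν H ^ n := by
    rw [hAeq, (hindep t).meas_iInter (fun i => ⟨H, hH, rfl⟩)]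
    have hv : ∀ i : Fin n, P (pair i ⁻¹' H) = ν H := by
      intro i
      rw [← Measure.map_apply (hpm i) hH, hνdef, hpairdef, ← hpair i t]
    exact (Finset.prod_congr rfl fun i _ => hv i).trans (by simp)
  have hPAB : P (A ∩ B) = ν S ^ n := by
    rw [hABeq, (hindep t).meas_iInter (fun i => ⟨S, hS, rfl⟩)]
    have hv : ∀ i : Fin n, P (pair i ⁻¹' S) = ν S := by
      intro i
      rw [← Measure.map_apply (hpm i) hS, hνdef, hpairdef, ← hpair i t]
    exact (Finset.prod_congr rfl fun i _ => hv i).trans (by simp)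
  have hcond : P[|A] B = (P A)⁻¹ * P (A ∩ B) := cond_apply hAm P B
  have hmul_inv_le : ∀ a k : ℝ≥0∞, a ≠ ⊤ → a⁻¹ * (k * a) ≤ k := by
    intro a k ha
    rcases eq_or_ne a 0 with rfl | h0
    · simp
    · rw [mul_comm k a, ← mul_assoc, ENNReal.inv_mul_cancel h0 ha, one_mul]
  rcases le_or_gt 1 |r| with hcase | hcase
  · -- degenerate case: |r| ≥ 1, RHS = 1
    have hsqrt0 : Real.sqrt ((1 - |r|) / (1 + |r|)) = 0 :=
      Real.sqrt_eq_zero_of_nonpos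
        (div_nonpos_of_nonpos_of_nonneg (by linarith) (by positivity))
    have hle : P[|A] B ≤ 1 := by
      rw [hcond]
      calc (P A)⁻¹ * P (A ∩ B) ≤ (P A)⁻¹ * (1 * P A) := by
            apply mul_le_mul_right
            simpa using measure_mono (Set.inter_subset_left : A ∩ B ⊆ A)
        _ ≤ 1 := hmul_inv_le _ _ (measure_ne_top P A)
    have h1 : (P[|A] B).toReal ≤ 1 := by
      simpa using ENNReal.toReal_mono ENNReal.one_ne_top hle
    have hRHS : (2:ℝ) ^ n * (1 - (γ (Set.Iic (u * Real.sqrt ((1 - |r|) / (1 + |r|))))).toReal) ^ n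
        = 1 := by
      rw [hsqrt0, mul_zero, hγ, gauss_Iic_zero]
      rw [← mul_pow]
      norm_num
    rw [hRHS]
    exact h1
  · -- main case: |r| < 1
    have habs := abs_lt.mp hcase
    have h1r : (0:ℝ) < 1 - r ^ 2 := by nlinarith [habs.1, habs.2]
    have hs0 : 0 < s := Real.sqrt_pos.2 h1r
    have hrs : r ^ 2 + s ^ 2 = 1 := by
      rw [hsdef, Real.sq_sqrt h1r.le]; ring
    set c : ℝ := u * ((1 - r) / s) with hcdef
    set c₀ : ℝ := u * Real.sqrt ((1 - |r|) / (1 + |r|)) with hc0def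
    have h1radd : (0:ℝ) < 1 + r := by linarith [habs.1]
    have h1rsub : (0:ℝ) < 1 - r := by linarith [habs.2]
    have hfrac : ((1 - r) / s) ^ 2 = (1 - r) / (1 + r) := by
      rw [div_pow, hsdef, Real.sq_sqrt h1r.le,
        show (1:ℝ) - r ^ 2 = (1 - r) * (1 + r) by ring]
      field_simp
    have hsqrt_eq : Real.sqrt ((1 - r) / (1 + r)) = (1 - r) / s := by
      rw [← hfrac, Real.sqrt_sq (by positivity)]
    have hc0c : c₀ ≤ c := by
      apply mul_le_mul_of_nonneg_left _ hu.le
      rw [← hsqrt_eq]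
      apply Real.sqrt_le_sqrt
      rw [div_le_div_iff₀ (by positivity) h1radd]
      nlinarith [le_abs_self r]
    set T : ℝ × ℝ → ℝ × ℝ := fun p => (r * p.1 + s * p.2, s * p.1 - r * p.2) with hTdef
    have hT : MeasurePreserving T (γ.prod γ) (γ.prod γ) := gauss2_rot r s hrs
    have hrect : MeasurableSet (Set.Ioi u ×ˢ Set.Ioi c) :=
      measurableSet_Ioi.prod measurableSet_Ioi
    have hνH : ν H = γ (Set.Ioi u) := by
      rw [hνdef, Measure.map_apply hφm hH]
      have hpre : φ ⁻¹' H = Set.Ioi u ×ˢ (Set.univ : Set ℝ) := by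
        ext p; simp [hφdef, hHdef]
      rw [hpre, Measure.prod_prod, measure_univ, mul_one]
    have hνS : ν S ≤ 2 * γ (Set.Ioi c₀) * γ (Set.Ioi u) := by
      rw [hνdef, Measure.map_apply hφm hS]
      have hcover : φ ⁻¹' S ⊆ (Set.Ioi u ×ˢ Set.Ioi c) ∪ T ⁻¹' (Set.Ioi u ×ˢ Set.Ioi c) := by
        rintro ⟨x, y⟩ hp
        simp only [Set.mem_preimage, hφdef, hSdef, Set.mem_setOf_eq] at hp
        obtain ⟨hx, hxy⟩ := hp
        rcases le_total x (r * x + s * y) with h | h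
        · left
          refine ⟨hx, ?_⟩
          show c < y
          calc c = u * (1 - r) / s := by rw [hcdef]; ring
            _ < y := by rw [div_lt_iff₀ hs0]; nlinarith
        · right
          simp only [Set.mem_preimage, hTdef, Set.mem_prod, Set.mem_Ioi]
          refine ⟨hxy, ?_⟩
          have h2 : (1 - r) * (r * x + s * y) ≤ s * (s * x - r * y) := by nlinarith [hrs]
          calc c = u * (1 - r) / s := by rw [hcdef]; ring
            _ < s * x - r * y := by rw [div_lt_iff₀ hs0]; nlinarith
      calc (γ.prod γ) (φ ⁻¹' S)
          ≤ (γ.prod γ) ((Set.Ioi u ×ˢ Set.Ioi c) ∪ T ⁻¹' (Set.Ioi u ×ˢ Set.Ioi c)) :=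
            measure_mono hcover
        _ ≤ (γ.prod γ) (Set.Ioi u ×ˢ Set.Ioi c)
            + (γ.prod γ) (T ⁻¹' (Set.Ioi u ×ˢ Set.Ioi c)) := measure_union_le _ _
        _ = 2 * ((γ.prod γ) (Set.Ioi u ×ˢ Set.Ioi c)) := by
            rw [hT.measure_preimage hrect.nullMeasurableSet, two_mul]
        _ = 2 * (γ (Set.Ioi u) * γ (Set.Ioi c)) := by rw [Measure.prod_prod]
        _ ≤ 2 * (γ (Set.Ioi u) * γ (Set.Ioi c₀)) := by
            gcongr
        _ = 2 * γ (Set.Ioi c₀) * γ (Set.Ioi u) := by ring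
    rw [hcond, hPA, hPAB]
    have hstep : (ν H ^ n)⁻¹ * ν S ^ n ≤ (2 * γ (Set.Ioi c₀)) ^ n := by
      calc (ν H ^ n)⁻¹ * ν S ^ n
          ≤ (ν H ^ n)⁻¹ * ((2 * γ (Set.Ioi c₀)) ^ n * ν H ^ n) := by
            apply mul_le_mul_right
            calc ν S ^ n ≤ (2 * γ (Set.Ioi c₀) * γ (Set.Ioi u)) ^ n :=
                  pow_le_pow_left₀ zero_le hνS n
              _ = (2 * γ (Set.Ioi c₀)) ^ n * ν H ^ n := by rw [hνH, mul_pow]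
        _ ≤ (2 * γ (Set.Ioi c₀)) ^ n := by
            apply hmul_inv_le
            rw [hνH]
            exact ENNReal.pow_ne_top (measure_ne_top _ _)
    have h2top : (2 : ℝ≥0∞) ≠ ⊤ := ENNReal.ofNat_ne_top
    have hgtop : γ (Set.Ioi c₀) ≠ ⊤ := measure_ne_top _ _
    have hfin : (2 * γ (Set.Ioi c₀)) ^ n ≠ ⊤ :=
      ENNReal.pow_ne_top (ENNReal.mul_ne_top h2top hgtop)
    refine le_trans (ENNReal.toReal_mono hfin hstep) ?_
    have hIoiR : (γ (Set.Ioi c₀)).toReal = 1 - (γ (Set.Iic c₀)).toReal := by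
      have hcompl : γ (Set.Ioi c₀) = 1 - γ (Set.Iic c₀) := by
        rw [← Set.compl_Iic, prob_compl_eq_one_sub measurableSet_Iic]
      rw [hcompl, ENNReal.toReal_sub_of_le prob_le_one ENNReal.one_ne_top, ENNReal.toReal_one]
    rw [ENNReal.toReal_pow, ENNReal.toReal_mul, mul_pow, hIoiR]
    simp
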